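/- A dyadic subbase S of a second-countable Hausdorff space X is strongly proper if and only if for every finite partial function σ from ℕ to {0,1,∂}, the sets S(σ) and S(σ_∂) \ S̄(σ) are exteriors of each other in the subspace S(σ_∂), i.e. S(σ_∂) \ S̄(σ) is the interior of S(σ_∂) \ S(σ) in the subspace topology of S(σ_∂), and S(σ) is the interior of S̄(σ) in the subspace topology of S(σ_∂). -/

import Mathlib

open TopologicalSpace

/-- The boundary set `S_k^∂ = X \ (S_k^0 ∪ S_k^1)`. -/
def dyadicBd {X : Type*} (S : ℕ → Bool → Set X) (k : ℕ) : Set X :=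
  (S k false ∪ S k true)ᶜ

/-- `S(σ)` for a finite partial function `σ` from ℕ to `{0,1,∂}`, encoded by a finite
domain `dom` and values `σ : ℕ → Option Bool` (`some a` means the digit `a`, `none` means `∂`). -/
def dyadicOpen3 {X : Type*} (S : ℕ → Bool → Set X) (dom : Finset ℕ)
    (σ : ℕ → Option Bool) : Set X :=
  ⋂ k ∈ dom, (σ k).elim (dyadicBd S k) (S k)

/-- `S̄(σ)` for a finite partial function `σ` from ℕ to `{0,1,∂}`. -/
def dyadicClosed3 {X : Type*} (S : ℕ → Bool → Set X) (dom : Finset ℕ)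
    (σ : ℕ → Option Bool) : Set X :=
  ⋂ k ∈ dom, (σ k).elim (dyadicBd S k) (fun a => S k a ∪ dyadicBd S k)

/-- `S(σ_∂)`, where `σ_∂` is the restriction of `σ` to the indices with value `∂`. -/
def dyadicDel {X : Type*} (S : ℕ → Bool → Set X) (dom : Finset ℕ)
    (σ : ℕ → Option Bool) : Set X :=
  ⋂ k ∈ dom, (σ k).elim (dyadicBd S k) (fun _ => Set.univ)

/-- A dyadic subbase `S` of a second-countable Hausdorff space is strongly proper iff for
every finite partial function `σ` from ℕ to `{0,1,∂}`, the sets `S(σ)` and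
`S(σ_∂) \ S̄(σ)` are the exteriors of each other in the subspace `S(σ_∂)`:
`S(σ_∂) \ S̄(σ)` is the interior of `S(σ_∂) \ S(σ)` relative to `S(σ_∂)`, and `S(σ)` is
the interior of `S̄(σ)` relative to `S(σ_∂)`. -/

private lemma image_interior_subtype' {X : Type*} [TopologicalSpace X] (D A : Set X) :
    Subtype.val '' interior {y : ↥D | (y : X) ∈ A} = D \ closure (D \ A) := by
  have h : {y : ↥D | (y : X) ∈ A} = (Subtype.val ⁻¹' A : Set ↥D) := rfl
  rw [h, ← compl_compl (Subtype.val ⁻¹' A : Set ↥D), interior_compl,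
    ← Set.preimage_compl, Topology.IsEmbedding.subtypeVal.closure_eq_preimage_closure_image,
    Subtype.image_preimage_coe, ← Set.preimage_compl, Subtype.image_preimage_coe]
  rfl

lemma key_lemma {X : Type*} [TopologicalSpace X] (S : ℕ → Bool → Set X)
    (hdisj : ∀ n, S n false ∩ S n true = ∅)
    (hsp : ∀ (dom : Finset ℕ) (σ : ℕ → Option Bool),
        dyadicClosed3 S dom σ = closure (dyadicOpen3 S dom σ))
    (dom : Finset ℕ) (σ : ℕ → Option Bool) (x : X)
    (hxD : x ∈ dyadicDel S dom σ) (U : Set X) (hU : IsOpen U) (hxU : x ∈ U)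
    (hUD : U ∩ dyadicDel S dom σ ⊆ dyadicClosed3 S dom σ) :
    x ∈ dyadicOpen3 S dom σ := by
  classical
  have hxC : x ∈ dyadicClosed3 S dom σ := hUD ⟨hxU, hxD⟩
  simp only [dyadicDel, Set.mem_iInter] at hxD
  simp only [dyadicClosed3, Set.mem_iInter] at hxC
  simp only [dyadicOpen3, Set.mem_iInter]
  intro k hk
  cases hσk : σ k with
  | none => have := hxD k hk; rw [hσk] at this; exact this
  | some a =>
    simp only [Option.elim]
    by_contra hxa
    -- x is in the boundary at k
    have hxbd : x ∈ dyadicBd S k := by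
      have := hxC k hk; rw [hσk] at this
      rcases this with h | h
      · exact absurd h hxa
      · exact h
    -- the flipped partial function
    set ρ : ℕ → Option Bool :=
      fun j => if j = k then some (!a) else if x ∈ dyadicBd S j then none else σ j with hρ
    have hxCρ : x ∈ dyadicClosed3 S dom ρ := by
      simp only [dyadicClosed3, Set.mem_iInter]
      intro j hj
      by_cases hjk : j = k
      · subst hjk; simp only [hρ, if_pos rfl, Option.elim]; exact Or.inr hxbd
      · by_cases hxb : x ∈ dyadicBd S j
        · simp only [hρ, if_neg hjk, if_pos hxb, Option.elim]; exact hxb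
        · simp only [hρ, if_neg hjk, if_neg hxb]
          cases hσj : σ j with
          | none =>
            exfalso; apply hxb
            have := hxD j hj; rw [hσj] at this; exact this
          | some b =>
            simp only [Option.elim]
            have := hxC j hj; rw [hσj] at this
            exact this
    rw [hsp dom ρ] at hxCρ
    obtain ⟨y, hyU, hyO⟩ := mem_closure_iff.mp hxCρ U hU hxU
    simp only [dyadicOpen3, Set.mem_iInter] at hyO
    -- y ∈ D(σ)
    have hyD : y ∈ dyadicDel S dom σ := by
      simp only [dyadicDel, Set.mem_iInter]
      intro j hj
      cases hσj : σ j with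
      | some b => simp [Option.elim]
      | none =>
        simp only [Option.elim]
        have hjk : j ≠ k := by intro h; rw [h, hσk] at hσj; exact Option.some_ne_none _ hσj
        have hxbj : x ∈ dyadicBd S j := by
          have := hxD j hj; rw [hσj] at this; exact this
        have := hyO j hj
        rw [hρ] at this
        simp only [if_neg hjk, if_pos hxbj, Option.elim] at this
        exact this
    have hyC : y ∈ dyadicClosed3 S dom σ := hUD ⟨hyU, hyD⟩
    simp only [dyadicClosed3, Set.mem_iInter] at hyC
    have hyk := hyC k hk; rw [hσk] at hyk
    have hyk' := hyO k hk
    rw [hρ] at hyk'; simp only [if_pos rfl, Option.elim] at hyk'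
    -- y ∈ S k (!a), but y ∈ S k a ∪ bd k : contradiction
    rcases hyk with h | h
    · cases a with
      | false => exact Set.eq_empty_iff_forall_notMem.mp (hdisj k) y ⟨h, hyk'⟩
      | true => exact Set.eq_empty_iff_forall_notMem.mp (hdisj k) y ⟨hyk', h⟩
    · apply h
      cases a with
      | false => exact Or.inr hyk'
      | true => exact Or.inl hyk'

theorem stronglyProper_iff_relative_exteriors (X : Type*) [TopologicalSpace X]
    [SecondCountableTopology X] [T2Space X]
    (S : ℕ → Bool → Set X)
    (hopen : ∀ n a, IsOpen (S n a))
    (hdisj : ∀ n, S n false ∩ S n true = ∅)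
    (hsub : (inferInstance : TopologicalSpace X) =
      TopologicalSpace.generateFrom {U : Set X | ∃ n a, U = S n a}) :
    (∀ (dom : Finset ℕ) (σ : ℕ → Option Bool),
        dyadicClosed3 S dom σ = closure (dyadicOpen3 S dom σ)) ↔
    (∀ (dom : Finset ℕ) (σ : ℕ → Option Bool),
        (Subtype.val ''
            interior {y : ↥(dyadicDel S dom σ) | (y : X) ∈ (dyadicOpen3 S dom σ)ᶜ} =
          dyadicDel S dom σ \ dyadicClosed3 S dom σ) ∧
        (Subtype.val ''
            interior {y : ↥(dyadicDel S dom σ) | (y : X) ∈ dyadicClosed3 S dom σ} =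
          dyadicOpen3 S dom σ)) := by
  clear hsub
  have hDclosed : ∀ (dom : Finset ℕ) (σ : ℕ → Option Bool), IsClosed (dyadicDel S dom σ) := by
    intro dom σ
    apply isClosed_biInter
    intro k _
    rcases σ k with _ | a
    · exact (IsOpen.union (hopen k false) (hopen k true)).isClosed_compl
    · exact isClosed_univ
  have hOD : ∀ (dom : Finset ℕ) (σ : ℕ → Option Bool),
      dyadicOpen3 S dom σ ⊆ dyadicDel S dom σ := by
    intro dom σ x hx
    simp only [dyadicOpen3, Set.mem_iInter] at hx
    simp only [dyadicDel, Set.mem_iInter]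
    intro k hk
    have := hx k hk
    rcases hc : σ k with _ | a <;> rw [hc] at this
    · exact this
    · exact Set.mem_univ x
  have hCD : ∀ (dom : Finset ℕ) (σ : ℕ → Option Bool),
      dyadicClosed3 S dom σ ⊆ dyadicDel S dom σ := by
    intro dom σ x hx
    simp only [dyadicClosed3, Set.mem_iInter] at hx
    simp only [dyadicDel, Set.mem_iInter]
    intro k hk
    have := hx k hk
    rcases hc : σ k with _ | a <;> rw [hc] at this
    · exact this
    · exact Set.mem_univ x
  constructor
  · intro hsp dom σ
    constructor
    · rw [image_interior_subtype', Set.diff_compl,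
        Set.inter_eq_right.mpr (hOD dom σ), hsp dom σ]
    · rw [image_interior_subtype']
      have hW : IsOpen (⋂ k ∈ dom, (σ k).elim Set.univ (S k)) := by
        apply isOpen_biInter_finset
        intro k _
        rcases σ k with _ | a
        · exact isOpen_univ
        · exact hopen k a
      have hOsubW : dyadicOpen3 S dom σ ⊆ ⋂ k ∈ dom, (σ k).elim Set.univ (S k) := by
        intro x hx
        simp only [dyadicOpen3, Set.mem_iInter] at hx
        simp only [Set.mem_iInter]
        intro k hk
        have := hx k hk
        rcases hc : σ k with _ | a <;> rw [hc] at this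
        · exact Set.mem_univ x
        · exact this
      ext x
      constructor
      · rintro ⟨hxD, hxcl⟩
        rw [mem_closure_iff] at hxcl
        push_neg at hxcl
        obtain ⟨U, hU, hxU, hUe⟩ := hxcl
        refine key_lemma S hdisj hsp dom σ x hxD U hU hxU ?_
        rintro y ⟨hyU, hyD⟩
        by_contra hyC
        exact Set.eq_empty_iff_forall_notMem.mp hUe y ⟨hyU, hyD, hyC⟩
      · intro hxO
        refine ⟨hOD dom σ hxO, fun hcl => ?_⟩
        have hsub2 : dyadicDel S dom σ \ dyadicClosed3 S dom σ ⊆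
            (⋂ k ∈ dom, (σ k).elim Set.univ (S k))ᶜ := by
          rintro y ⟨hyD, hyC⟩ hyW
          apply hyC
          simp only [dyadicDel, Set.mem_iInter] at hyD
          simp only [Set.mem_iInter] at hyW
          simp only [dyadicClosed3, Set.mem_iInter]
          intro k hk
          have h1 := hyD k hk
          have h2 := hyW k hk
          rcases hc : σ k with _ | a <;> rw [hc] at h1 h2
          · exact h1
          · exact Or.inl h2
        exact closure_minimal hsub2 hW.isClosed_compl hcl (hOsubW hxO)
  · intro h dom σ
    have h1 := (h dom σ).1
    rw [image_interior_subtype', Set.diff_compl,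
      Set.inter_eq_right.mpr (hOD dom σ)] at h1
    have hclD : closure (dyadicOpen3 S dom σ) ⊆ dyadicDel S dom σ :=
      closure_minimal (hOD dom σ) (hDclosed dom σ)
    ext x
    constructor
    · intro hx
      by_contra hx'
      have hmem : x ∈ dyadicDel S dom σ \ closure (dyadicOpen3 S dom σ) :=
        ⟨hCD dom σ hx, hx'⟩
      rw [h1] at hmem
      exact hmem.2 hx
    · intro hx
      by_contra hx'
      have hmem : x ∈ dyadicDel S dom σ \ dyadicClosed3 S dom σ := ⟨hclD hx, hx'⟩
      rw [← h1] at hmem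
      exact hmem.2 hx
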